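/- Let m ≥ 2 be an integer, β = β_m the multinacci number of order m, and α ∈ (0, 2-β). With p = (1-α)/β, the first m+1 letters of the itinerary of p under T⁺_{β,α} are (1,0,0,...,0) (one 1 followed by m zeros); that is, p ≥ p trivially gives first letter 1, and (T⁺_{β,α})^j(p) < p for all 1 ≤ j ≤ m. -/

import Mathlib

noncomputable def Tplus (β α : ℝ) (x : ℝ) : ℝ :=
  if x < (1 - α) / β then β * x + α else β * x + α - 1

/-- For the multinacci number `β = β_m`, the first `m+1` letters of the upper
kneading invariant are `1 0 0 ⋯ 0`. -/
theorem upper_kneading_begins (m : ℕ) (hm : 2 ≤ m) (β α : ℝ)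
    (hβ : β ∈ Set.Ioo (1 : ℝ) 2) (hmulti : β ^ m = ∑ i ∈ Finset.range m, β ^ i)
    (hα : α ∈ Set.Ioo (0 : ℝ) (2 - β)) :
    ¬ ((Tplus β α)^[0] ((1 - α) / β) < (1 - α) / β) ∧
      ∀ j, 1 ≤ j → j ≤ m → (Tplus β α)^[j] ((1 - α) / β) < (1 - α) / β := by
  obtain ⟨hβ1, hβ2⟩ := hβ
  obtain ⟨hα0, hα2⟩ := hα
  have hβ0 : (0:ℝ) < β := by linarith
  set p := (1 - α) / β with hp
  have hkey : β ^ m * (β - 1) = β ^ m - 1 := by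
    have h := geom_sum_mul β m
    rw [← hmulti] at h
    exact h
  have hCpos : (0:ℝ) < β ^ (m - 1) := pow_pos hβ0 _
  have hpow : β ^ m = β ^ (m - 1) * β := by
    conv_lhs => rw [show m = (m-1)+1 by omega, pow_succ]
  have hSm : (∑ i ∈ Finset.range (m-1), β ^ i) = β ^ m - β ^ (m-1) := by
    have h : (∑ i ∈ Finset.range m, β ^ i)
        = (∑ i ∈ Finset.range (m-1), β ^ i) + β ^ (m-1) := by
      conv_lhs => rw [show m = (m-1)+1 by omega]
      exact Finset.sum_range_succ _ _
    rw [← hmulti] at h; linarith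
  -- key bound: partial geometric sums scaled by α stay below p
  have hbound : ∀ k, k ≤ m - 1 → α * (∑ i ∈ Finset.range k, β ^ i) < p := by
    intro k hk
    have hmono : (∑ i ∈ Finset.range k, β ^ i)
        ≤ ∑ i ∈ Finset.range (m-1), β ^ i := by
      apply Finset.sum_le_sum_of_subset_of_nonneg
        (Finset.range_subset_range.mpr hk)
      intro i _ _
      positivity
    have h1 : α * (∑ i ∈ Finset.range k, β ^ i)
        ≤ α * (∑ i ∈ Finset.range (m-1), β ^ i) :=
      mul_le_mul_of_nonneg_left hmono (le_of_lt hα0)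
    have h2 : α * (∑ i ∈ Finset.range (m-1), β ^ i) < p := by
      rw [hSm, hp, hpow, lt_div_iff₀ hβ0]
      rw [hpow] at hkey
      nlinarith [mul_pos (show (0:ℝ) < 2 - β - α by linarith)
        (mul_pos hCpos hβ0), hkey, hα0, mul_pos hCpos hβ0]
    linarith
  have hTp : Tplus β α p = 0 := by
    rw [Tplus, if_neg (lt_irrefl p), hp]
    field_simp
    ring
  have hiter : ∀ j, 1 ≤ j → j ≤ m →
      (Tplus β α)^[j] p = α * ∑ i ∈ Finset.range (j-1), β ^ i := by
    intro j
    induction j with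
    | zero => omega
    | succ n ih =>
      intro _ hjm
      by_cases hn : n = 0
      · subst hn
        simp [hTp]
      · have hn1 : 1 ≤ n := by omega
        rw [Function.iterate_succ_apply', ih hn1 (by omega)]
        have hlt : α * ∑ i ∈ Finset.range (n-1), β ^ i < p :=
          hbound _ (by omega)
        rw [Tplus, if_pos hlt]
        rw [show n + 1 - 1 = (n-1)+1 from by omega, geom_sum_succ]
        ring
  refine ⟨by simp, fun j h1 hjm => ?_⟩
  rw [hiter j h1 hjm]
  exact hbound _ (by omega)
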